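/- Assume each conjugate ℓ_i* is γ-strongly convex with γ > 0, and let α* ∈ ℝ^n maximize D. Then for every real σ ≥ σ_min and every α ∈ ℝ^n: Σ_{k=1}^K ε_{D,k}(α) ≥ (λnγ/(σ + λnγ))·(D(α*) − D(α)). -/

import Mathlib

open Finset MeasureTheory

noncomputable section

/-- Squared Euclidean norm of a finite real vector. -/
def sqnorm {m : ℕ} (v : Fin m → ℝ) : ℝ := ∑ j, v j ^ 2

/-- Euclidean norm of a finite real vector. -/
def euclNorm {m : ℕ} (v : Fin m → ℝ) : ℝ := Real.sqrt (sqnorm v)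

/-- Euclidean inner product. -/
def dotp {m : ℕ} (u v : Fin m → ℝ) : ℝ := ∑ j, u j * v j

/-- `g` is the (real-valued) Fenchel conjugate of `f`:
`g u` is the least upper bound of `z ↦ u*z - f z`. -/
def IsFenchelConj (f g : ℝ → ℝ) : Prop :=
  ∀ u : ℝ, IsLUB (Set.range fun z : ℝ => u * z - f z) (g u)

/-- `f` is smooth with constant `c`: differentiable with `c`-Lipschitz derivative. -/
def SmoothWith (c : ℝ) (f : ℝ → ℝ) : Prop :=
  Differentiable ℝ f ∧ ∀ z z' : ℝ, |deriv f z - deriv f z'| ≤ c * |z - z'|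

/-- `g : ℝ → ℝ` is `γ`-strongly convex. -/
def StrongConvexWith (γ : ℝ) (g : ℝ → ℝ) : Prop :=
  ConvexOn ℝ Set.univ fun u => g u - γ / 2 * u ^ 2

variable {n d K : ℕ}

/-- `A α` where the `i`-th column of `A` is `x i / (λ n)`. -/
def matA (lam : ℝ) (x : Fin n → Fin d → ℝ) (α : Fin n → ℝ) : Fin d → ℝ :=
  ∑ i, (α i / (lam * n)) • x i

/-- The block-`k` subvector `α_[k]` of `α`. -/
def blkOf (part : Fin n → Fin K) (k : Fin K) (α : Fin n → ℝ) :
    {i : Fin n // part i = k} → ℝ :=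
  fun i => α i.1

/-- `A_[k] β`: the block-`k` submatrix of `A` applied to a block-`k` vector. -/
def blkA (lam : ℝ) (x : Fin n → Fin d → ℝ) (part : Fin n → Fin K) (k : Fin K)
    (β : {i : Fin n // part i = k} → ℝ) : Fin d → ℝ :=
  ∑ i : {i : Fin n // part i = k}, (β i / (lam * n)) • x i.1

/-- `α⟨k←β⟩`: replace the block-`k` coordinates of `α` by `β`. -/
def updBlk (part : Fin n → Fin K) (k : Fin K) (α : Fin n → ℝ)
    (β : {i : Fin n // part i = k} → ℝ) : Fin n → ℝ :=
  fun i => if h : part i = k then β ⟨i, h⟩ else α i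

/-- `ι_k β`: zero-padding of a block-`k` vector to a full vector. -/
def padBlk (part : Fin n → Fin K) (k : Fin K)
    (β : {i : Fin n // part i = k} → ℝ) : Fin n → ℝ :=
  fun i => if h : part i = k then β ⟨i, h⟩ else 0

/-- The primal objective `P(w)`. -/
def primalObj (lam : ℝ) (x : Fin n → Fin d → ℝ) (l : Fin n → ℝ → ℝ)
    (w : Fin d → ℝ) : ℝ :=
  lam / 2 * sqnorm w + (1 / (n : ℝ)) * ∑ i, l i (dotp w (x i))

/-- The dual objective `D(α)`. -/
def dualObj (lam : ℝ) (x : Fin n → Fin d → ℝ) (lstar : Fin n → ℝ → ℝ)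
    (α : Fin n → ℝ) : ℝ :=
  -(lam / 2) * sqnorm (matA lam x α) - (1 / (n : ℝ)) * ∑ i, lstar i (-(α i))

/-- The local suboptimality `ε_{D,k}(α)` on block `k`. -/
def epsD (lam : ℝ) (x : Fin n → Fin d → ℝ) (lstar : Fin n → ℝ → ℝ)
    (part : Fin n → Fin K) (k : Fin K) (α : Fin n → ℝ) : ℝ :=
  ⨆ β : {i : Fin n // part i = k} → ℝ,
    dualObj lam x lstar (updBlk part k α β) - dualObj lam x lstar α

/-- `σ_min`: the supremum over nonzero `α` of
`λ²n²·(Σ_k ‖A_[k]α_[k]‖² − ‖Aα‖²)/‖α‖²`. -/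
def sigmaMin (lam : ℝ) (x : Fin n → Fin d → ℝ) (part : Fin n → Fin K) : ℝ :=
  sSup { r : ℝ | ∃ α : Fin n → ℝ, α ≠ 0 ∧
    r = lam ^ 2 * (n : ℝ) ^ 2 *
      ((∑ k, sqnorm (blkA lam x part k (blkOf part k α))) - sqnorm (matA lam x α)) /
        sqnorm α }

/-- The local dual objective `D_k(β; w̄)` on block `k`. -/
def locDual (lam : ℝ) (x : Fin n → Fin d → ℝ) (lstar : Fin n → ℝ → ℝ)
    (part : Fin n → Fin K) (k : Fin K) (wbar : Fin d → ℝ)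
    (β : {i : Fin n // part i = k} → ℝ) : ℝ :=
  -(lam / 2) * sqnorm (wbar + blkA lam x part k β)
    - (1 / (n : ℝ)) * ∑ i : {i : Fin n // part i = k}, lstar i.1 (-(β i))
    + lam / 2 * sqnorm wbar

/-- The local primal objective `P_k(v; w̄)` on block `k`. -/
def locPrimal (lam : ℝ) (x : Fin n → Fin d → ℝ) (l : Fin n → ℝ → ℝ)
    (part : Fin n → Fin K) (k : Fin K) (wbar v : Fin d → ℝ) : ℝ :=
  (1 / (n : ℝ)) * ∑ i : {i : Fin n // part i = k}, l i.1 (dotp (wbar + v) (x i.1))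
    + lam / 2 * sqnorm v

/-- Run `H` iterations of the coordinate-wise step `st`, where `ω` lists
the (randomly chosen) coordinates used in the successive iterations. -/
def iterRun {γ : Type*} {ι : Type*} (st : ι → γ → γ) :
    (H : ℕ) → (Fin H → ι) → γ → γ
  | 0, _, b => b
  | H + 1, ω, b => iterRun st H (fun h => ω h.succ) (st (ω 0) b)


section Helpers

lemma sqnorm_nonneg' {m : ℕ} (v : Fin m → ℝ) : 0 ≤ sqnorm v :=
  Finset.sum_nonneg fun _ _ => sq_nonneg _

lemma sqnorm_pos' {m : ℕ} {v : Fin m → ℝ} (hv : v ≠ 0) : 0 < sqnorm v := by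
  rcases Function.ne_iff.1 hv with ⟨j, hj⟩
  calc (0:ℝ) < v j ^ 2 := sq_pos_of_ne_zero hj
    _ ≤ sqnorm v := Finset.single_le_sum (fun i _ => sq_nonneg (v i)) (mem_univ j)

lemma sqnorm_zero' {m : ℕ} : sqnorm (0 : Fin m → ℝ) = 0 := by simp [sqnorm]

lemma sqnorm_add_smul {m : ℕ} (u v : Fin m → ℝ) (c : ℝ) :
    sqnorm (u + c • v) = sqnorm u + 2*c*dotp u v + c^2 * sqnorm v := by
  simp only [sqnorm, dotp, Pi.add_apply, Pi.smul_apply, smul_eq_mul,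
    Finset.mul_sum, ← Finset.sum_add_distrib]
  exact Finset.sum_congr rfl fun j _ => by ring

lemma dotp_sum' {m : ℕ} {ι : Type*} (s : Finset ι) (u : Fin m → ℝ) (v : ι → Fin m → ℝ) :
    dotp u (∑ i ∈ s, v i) = ∑ i ∈ s, dotp u (v i) := by
  simp only [dotp, Finset.sum_apply, Finset.mul_sum]
  exact Finset.sum_comm

variable {n' d' K' : ℕ}

lemma matA_apply (lam : ℝ) (x : Fin n' → Fin d' → ℝ) (v : Fin n' → ℝ) (j : Fin d') :
    matA lam x v j = ∑ i, v i / (lam * n') * x i j := by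
  simp [matA, Finset.sum_apply]

lemma blkA_apply (lam : ℝ) (x : Fin n' → Fin d' → ℝ) (part : Fin n' → Fin K') (k : Fin K')
    (β : {i : Fin n' // part i = k} → ℝ) (j : Fin d') :
    blkA lam x part k β j = ∑ i : {i : Fin n' // part i = k}, β i / (lam * n') * x i.1 j := by
  simp [blkA, Finset.sum_apply]

lemma subtype_sum_eq_filter (part : Fin n' → Fin K') (k : Fin K') (f : Fin n' → ℝ) :
    ∑ i : {i : Fin n' // part i = k}, f i.1 = ∑ i ∈ univ.filter (fun i => part i = k), f i :=
  (Finset.sum_subtype (univ.filter (fun i => part i = k)) (fun i => by simp) f).symm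

lemma sum_blocks (part : Fin n' → Fin K') (f : Fin n' → ℝ) :
    ∑ k, ∑ i : {i : Fin n' // part i = k}, f i.1 = ∑ i, f i := by
  simp_rw [subtype_sum_eq_filter]
  exact Finset.sum_fiberwise univ part f

lemma sum_blkA (lam : ℝ) (x : Fin n' → Fin d' → ℝ) (part : Fin n' → Fin K') (v : Fin n' → ℝ) :
    ∑ k, blkA lam x part k (blkOf part k v) = matA lam x v := by
  funext j
  rw [Finset.sum_apply]
  simp_rw [blkA_apply, matA_apply]
  exact sum_blocks part (fun i => v i / (lam * n') * x i j)

lemma matA_add_sub (lam : ℝ) (x : Fin n' → Fin d' → ℝ) (a b : Fin n' → ℝ) :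
    matA lam x b = matA lam x a + matA lam x (fun i => b i - a i) := by
  funext j
  simp only [Pi.add_apply, matA_apply]
  rw [← Finset.sum_add_distrib]
  exact Finset.sum_congr rfl fun i _ => by ring

lemma matA_updBlk (lam : ℝ) (x : Fin n' → Fin d' → ℝ) (part : Fin n' → Fin K') (k : Fin K')
    (α Δ : Fin n' → ℝ) (s : ℝ) :
    matA lam x (updBlk part k α (fun i => α i.1 + s * Δ i.1))
      = matA lam x α + s • blkA lam x part k (blkOf part k Δ) := by
  funext j
  simp only [Pi.add_apply, Pi.smul_apply, smul_eq_mul, matA_apply, blkA_apply]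
  have h1 : ∀ i : Fin n', updBlk part k α (fun i => α i.1 + s * Δ i.1) i
      = α i + (if part i = k then s * Δ i else 0) := by
    intro i
    by_cases h : part i = k <;> simp [updBlk, h]
  simp_rw [h1, add_div, add_mul, Finset.sum_add_distrib, blkOf]
  congr 1
  rw [subtype_sum_eq_filter part k (fun i => Δ i / (lam*n') * x i j), Finset.mul_sum,
    Finset.sum_filter]
  exact Finset.sum_congr rfl fun i _ => by by_cases h : part i = k <;> simp [h] <;> ring

lemma lstar_sum_updBlk (lstar : Fin n' → ℝ → ℝ) (part : Fin n' → Fin K') (k : Fin K')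
    (α Δ : Fin n' → ℝ) (s : ℝ) :
    (∑ i, lstar i (-(updBlk part k α (fun i => α i.1 + s * Δ i.1) i)))
      - ∑ i, lstar i (-(α i))
      = ∑ i : {i : Fin n' // part i = k},
          (lstar i.1 (-(α i.1 + s * Δ i.1)) - lstar i.1 (-(α i.1))) := by
  rw [← Finset.sum_sub_distrib,
    subtype_sum_eq_filter part k (fun i => lstar i (-(α i + s * Δ i)) - lstar i (-(α i))),
    Finset.sum_filter]
  refine Finset.sum_congr rfl fun i _ => ?_
  by_cases h : part i = k <;> simp [updBlk, h]

lemma updBlk_self (part : Fin n' → Fin K') (k : Fin K') (α : Fin n' → ℝ) :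
    updBlk part k α (blkOf part k α) = α := by
  funext i
  by_cases h : part i = k <;> simp [updBlk, blkOf, h]

lemma strong_ineq {γ : ℝ} {g : ℝ → ℝ}
    (hg : ConvexOn ℝ Set.univ fun u => g u - γ / 2 * u ^ 2)
    (a b s : ℝ) (h0 : 0 ≤ s) (h1 : s ≤ 1) :
    g ((1-s)*a + s*b) ≤ (1-s)*g a + s*g b - γ/2*s*(1-s)*(a-b)^2 := by
  have h := hg.2 (Set.mem_univ a) (Set.mem_univ b) (by linarith : (0:ℝ) ≤ 1 - s) h0 (by ring)
  simp only [smul_eq_mul] at h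
  nlinarith [h]

lemma sqnorm_blkA_le (lam : ℝ) (x : Fin n' → Fin d' → ℝ) (part : Fin n' → Fin K') (k : Fin K')
    (v : Fin n' → ℝ) :
    sqnorm (blkA lam x part k (blkOf part k v))
      ≤ (n':ℝ) * ∑ i : {i : Fin n' // part i = k}, (v i.1 / (lam * n'))^2 * sqnorm (x i.1) := by
  have step : ∀ j : Fin d', (blkA lam x part k (blkOf part k v) j)^2
      ≤ (n':ℝ) * ∑ i : {i : Fin n' // part i = k}, (v i.1 / (lam * n'))^2 * (x i.1 j)^2 := by
    intro j
    rw [blkA_apply]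
    have h := sq_sum_le_card_mul_sum_sq
      (s := (univ : Finset {i : Fin n' // part i = k}))
      (f := fun i => v i.1 / (lam * n') * x i.1 j)
    have hcard : ((univ : Finset {i : Fin n' // part i = k}).card : ℝ) ≤ (n':ℝ) := by
      have := Fintype.card_subtype_le (fun i : Fin n' => part i = k)
      rw [Finset.card_univ]; rw [Fintype.card_fin] at this; exact_mod_cast this
    calc (∑ i : {i : Fin n' // part i = k}, blkOf part k v i / (lam*n') * x i.1 j)^2
        ≤ ((univ : Finset {i : Fin n' // part i = k}).card : ℝ)
            * ∑ i : {i : Fin n' // part i = k}, (v i.1 / (lam*n') * x i.1 j)^2 := by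
          exact_mod_cast h
      _ ≤ (n':ℝ) * ∑ i : {i : Fin n' // part i = k}, (v i.1 / (lam*n'))^2 * (x i.1 j)^2 := by
          apply mul_le_mul_of_nonneg hcard (le_of_eq ?_) (Nat.cast_nonneg _) (by positivity)
          exact Finset.sum_congr rfl fun i _ => by ring
  calc sqnorm (blkA lam x part k (blkOf part k v))
      ≤ ∑ j, (n':ℝ) * ∑ i : {i : Fin n' // part i = k}, (v i.1/(lam*n'))^2 * (x i.1 j)^2 :=
        Finset.sum_le_sum fun j _ => step j
    _ = (n':ℝ) * ∑ i : {i : Fin n' // part i = k}, (v i.1/(lam*n'))^2 * sqnorm (x i.1) := by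
        rw [← Finset.mul_sum, Finset.sum_comm]
        simp_rw [sqnorm, Finset.mul_sum]

lemma sigma_set_bddAbove (lam : ℝ) (hlam : 0 < lam) (hn : 0 < n')
    (x : Fin n' → Fin d' → ℝ) (part : Fin n' → Fin K') :
    BddAbove { r : ℝ | ∃ α : Fin n' → ℝ, α ≠ 0 ∧
      r = lam ^ 2 * (n' : ℝ) ^ 2 *
        ((∑ k, sqnorm (blkA lam x part k (blkOf part k α))) - sqnorm (matA lam x α)) /
          sqnorm α } := by
  refine ⟨(n':ℝ) * ∑ i, sqnorm (x i), ?_⟩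
  rintro r ⟨α, hα, rfl⟩
  have hNα : 0 < sqnorm α := sqnorm_pos' hα
  have hnR : (0:ℝ) < (n':ℝ) := Nat.cast_pos.2 hn
  set M := ∑ i, sqnorm (x i) with hM
  have hM0 : 0 ≤ M := Finset.sum_nonneg fun i _ => sqnorm_nonneg' _
  rw [div_le_iff₀ hNα]
  have hS1 : (∑ k, sqnorm (blkA lam x part k (blkOf part k α)))
      ≤ (n':ℝ) * ∑ i, (α i / (lam*n'))^2 * sqnorm (x i) := by
    calc (∑ k, sqnorm (blkA lam x part k (blkOf part k α)))
        ≤ ∑ k, (n':ℝ) * ∑ i : {i : Fin n' // part i = k}, (α i.1/(lam*n'))^2 * sqnorm (x i.1) :=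
          Finset.sum_le_sum fun k _ => sqnorm_blkA_le lam x part k α
      _ = (n':ℝ) * ∑ k, ∑ i : {i : Fin n' // part i = k}, (α i.1/(lam*n'))^2 * sqnorm (x i.1) := by
          rw [Finset.mul_sum]
      _ = (n':ℝ) * ∑ i, (α i/(lam*n'))^2 * sqnorm (x i) := by
          rw [sum_blocks part (fun i => (α i/(lam*n'))^2 * sqnorm (x i))]
  have hsum : ∑ i, (α i / (lam*n'))^2 * sqnorm (x i) ≤ sqnorm α * M / (lam*n')^2 := by
    have h1 : ∀ i : Fin n', (α i / (lam*n'))^2 * sqnorm (x i)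
        ≤ sqnorm α / (lam*n')^2 * sqnorm (x i) := by
      intro i
      apply mul_le_mul_of_nonneg_right _ (sqnorm_nonneg' _)
      rw [div_pow]
      apply div_le_div_of_nonneg_right _ (by positivity)
      exact Finset.single_le_sum (fun i _ => sq_nonneg (α i)) (mem_univ i)
    calc ∑ i, (α i / (lam*n'))^2 * sqnorm (x i)
        ≤ ∑ i, sqnorm α / (lam*n')^2 * sqnorm (x i) := Finset.sum_le_sum fun i _ => h1 i
      _ = sqnorm α * M / (lam*n')^2 := by rw [← Finset.mul_sum]; ring
  have hq : 0 ≤ sqnorm (matA lam x α) := sqnorm_nonneg' _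
  have key : (∑ k, sqnorm (blkA lam x part k (blkOf part k α)))
      ≤ (n':ℝ) * (sqnorm α * M / (lam*n')^2) :=
    le_trans hS1 (mul_le_mul_of_nonneg_left hsum hnR.le)
  have h2 : lam ^ 2 * (n':ℝ) ^ 2 *
      ((∑ k, sqnorm (blkA lam x part k (blkOf part k α))) - sqnorm (matA lam x α))
      ≤ lam^2 * (n':ℝ)^2 * ((n':ℝ) * (sqnorm α * M / (lam*n')^2)) :=
    mul_le_mul_of_nonneg_left (by linarith) (by positivity)
  have h3 : lam^2 * (n':ℝ)^2 * ((n':ℝ) * (sqnorm α * M / (lam*n')^2))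
      = (n':ℝ) * M * sqnorm α := by
    field_simp
  linarith

lemma zero_mem_sigma_set (lam : ℝ) (hn : 0 < n')
    (x : Fin n' → Fin d' → ℝ) (part : Fin n' → Fin K') :
    (0:ℝ) ∈ { r : ℝ | ∃ α : Fin n' → ℝ, α ≠ 0 ∧
      r = lam ^ 2 * (n' : ℝ) ^ 2 *
        ((∑ k, sqnorm (blkA lam x part k (blkOf part k α))) - sqnorm (matA lam x α)) /
          sqnorm α } := by
  set i0 : Fin n' := ⟨0, hn⟩
  set α₀ : Fin n' → ℝ := fun i => if i = i0 then 1 else 0 with hα₀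
  refine ⟨α₀, fun h => by simpa [hα₀] using congrFun h i0, ?_⟩
  have hb : ∀ k, blkA lam x part k (blkOf part k α₀)
      = if part i0 = k then matA lam x α₀ else 0 := by
    intro k
    funext j
    rw [blkA_apply]
    have : (∑ i : {i : Fin n' // part i = k}, blkOf part k α₀ i / (lam * n') * x i.1 j)
        = ∑ i ∈ univ.filter (fun i => part i = k), α₀ i / (lam * n') * x i j :=
      subtype_sum_eq_filter part k (fun i => α₀ i / (lam * n') * x i j)
    rw [this, Finset.sum_filter]
    by_cases h : part i0 = k
    · simp only [h, if_true, matA_apply]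
      refine Finset.sum_congr rfl fun i _ => ?_
      by_cases hi : i = i0
      · subst hi; simp [h]
      · simp [hα₀, hi]
    · simp only [h, if_false, Pi.zero_apply]
      apply Finset.sum_eq_zero
      intro i _
      by_cases hi : i = i0
      · subst hi; simp [h]
      · simp [hα₀, hi]
  have hS : (∑ k, sqnorm (blkA lam x part k (blkOf part k α₀))) = sqnorm (matA lam x α₀) := by
    simp_rw [hb, apply_ite sqnorm, sqnorm_zero']
    rw [Finset.sum_ite_eq univ (part i0) (fun _ => sqnorm (matA lam x α₀))]
    simp
  rw [hS]
  simp

end Helpers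

/-- the sum of local suboptimalities dominates a fixed fraction
of the global dual suboptimality. -/
theorem sum_eps_ge_fraction_of_gap
    (n d K : ℕ) (hn : 0 < n) (hd : 0 < d) (hK : 0 < K)
    (lam γ : ℝ) (hlam : 0 < lam) (hγ : 0 < γ)
    (x : Fin n → Fin d → ℝ)
    (l lstar : Fin n → ℝ → ℝ)
    (hconj : ∀ i, IsFenchelConj (l i) (lstar i))
    (hstrong : ∀ i, StrongConvexWith γ (lstar i))
    (part : Fin n → Fin K) (hpart : ∀ k, ∃ i, part i = k)
    (αstar : Fin n → ℝ)
    (hstar : ∀ α, dualObj lam x lstar α ≤ dualObj lam x lstar αstar)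
    (σ : ℝ) (hσ : sigmaMin lam x part ≤ σ)
    (α : Fin n → ℝ) :
    lam * n * γ / (σ + lam * n * γ) *
        (dualObj lam x lstar αstar - dualObj lam x lstar α)
      ≤ ∑ k, epsD lam x lstar part k α := by
  classical
  have hnR : (0:ℝ) < (n:ℝ) := Nat.cast_pos.2 hn
  have hbddset := sigma_set_bddAbove lam hlam hn x part
  have hσ0 : (0:ℝ) ≤ σ :=
    le_trans (le_csSup hbddset (zero_mem_sigma_set lam hn x part)) hσ
  have hden : (0:ℝ) < σ + lam * n * γ := by positivity
  set s : ℝ := lam * n * γ / (σ + lam * n * γ) with hs_def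
  have hs0 : 0 ≤ s := by positivity
  have hs1 : s ≤ 1 := by
    rw [hs_def, div_le_one hden]; linarith
  have hskey : s * (σ + lam * n * γ) = lam * n * γ := div_mul_cancel₀ _ hden.ne'
  have hbddk : ∀ k : Fin K, BddAbove (Set.range fun β : {i : Fin n // part i = k} → ℝ =>
      dualObj lam x lstar (updBlk part k α β) - dualObj lam x lstar α) := by
    intro k
    refine ⟨dualObj lam x lstar αstar - dualObj lam x lstar α, ?_⟩
    rintro r ⟨β, rfl⟩
    exact sub_le_sub_right (hstar _) _
  have heps : ∀ (k : Fin K) (β : {i : Fin n // part i = k} → ℝ),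
      dualObj lam x lstar (updBlk part k α β) - dualObj lam x lstar α
        ≤ epsD lam x lstar part k α :=
    fun k β => le_ciSup (hbddk k) β
  have heps0 : ∀ k : Fin K, 0 ≤ epsD lam x lstar part k α := by
    intro k
    have := heps k (blkOf part k α)
    rwa [updBlk_self, sub_self] at this
  by_cases hne : αstar = α
  · rw [hne, sub_self, mul_zero]
    exact Finset.sum_nonneg fun k _ => heps0 k
  -- main case
  set Δ : Fin n → ℝ := fun i => αstar i - α i with hΔ_def
  have hΔne : Δ ≠ 0 := by
    intro h
    apply hne
    funext i
    have := congrFun h i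
    simp only [hΔ_def, Pi.zero_apply] at this
    linarith
  set u : Fin d → ℝ := matA lam x α with hu_def
  set uΔ : Fin d → ℝ := matA lam x Δ with huΔ_def
  set w : Fin K → Fin d → ℝ := fun k => blkA lam x part k (blkOf part k Δ) with hw_def
  set p : ℝ := dotp u uΔ with hp_def
  set q : ℝ := sqnorm uΔ with hq_def
  set N : ℝ := sqnorm Δ with hN_def
  set S1 : ℝ := ∑ k, sqnorm (w k) with hS1_def
  set L : ℝ := ∑ i, (lstar i (-(αstar i)) - lstar i (-(α i))) with hL_def
  have hsumw : ∑ k, w k = uΔ := sum_blkA lam x part Δ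
  have hq0 : 0 ≤ q := sqnorm_nonneg' _
  have hN0 : 0 < N := sqnorm_pos' hΔne
  -- F3 : the sigma bound
  have hrle : lam ^ 2 * (n : ℝ) ^ 2 * (S1 - q) / N ≤ σ := by
    refine le_trans (le_csSup hbddset ?_) hσ
    exact ⟨Δ, hΔne, rfl⟩
  have F3 : S1 ≤ q + σ * N / (lam^2 * (n:ℝ)^2) := by
    rw [div_le_iff₀ hN0] at hrle
    have hc : (0:ℝ) < lam^2 * (n:ℝ)^2 := by positivity
    have h2 : S1 - q ≤ σ * N / (lam^2 * (n:ℝ)^2) := (le_div_iff₀ hc).2 (by nlinarith)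
    linarith
  -- F2 : expression for the gap
  have F2 : dualObj lam x lstar αstar - dualObj lam x lstar α
      = -(lam/2) * (2*p + q) - (1/(n:ℝ)) * L := by
    have hst : matA lam x αstar = u + (1:ℝ) • uΔ := by
      rw [one_smul, hu_def, huΔ_def]
      exact matA_add_sub lam x α αstar
    unfold dualObj
    rw [hst, sqnorm_add_smul, hL_def, Finset.sum_sub_distrib]
    ring
  -- E1 : per-block difference
  have E1 : ∀ k : Fin K,
      dualObj lam x lstar (updBlk part k α (fun i => α i.1 + s * Δ i.1))
        - dualObj lam x lstar α
      = -(lam/2) * (2*s*dotp u (w k) + s^2 * sqnorm (w k))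
        - (1/(n:ℝ)) * ∑ i : {i : Fin n // part i = k},
            (lstar i.1 (-(α i.1 + s * Δ i.1)) - lstar i.1 (-(α i.1))) := by
    intro k
    have hm : matA lam x (updBlk part k α (fun i => α i.1 + s * Δ i.1)) = u + s • w k :=
      matA_updBlk lam x part k α Δ s
    have hl := lstar_sum_updBlk lstar part k α Δ s
    unfold dualObj
    rw [hm, sqnorm_add_smul]
    rw [← hl]
    ring
  -- E2 : sum over blocks
  set T : ℝ := ∑ i, (lstar i (-(α i + s * Δ i)) - lstar i (-(α i))) with hT_def
  have E2 : ∑ k, (dualObj lam x lstar (updBlk part k α (fun i => α i.1 + s * Δ i.1))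
        - dualObj lam x lstar α)
      = -lam * s * p - (lam/2) * s^2 * S1 - (1/(n:ℝ)) * T := by
    rw [Finset.sum_congr rfl fun k _ => E1 k]
    have h1 : ∀ k : Fin K,
        -(lam/2) * (2*s*dotp u (w k) + s^2 * sqnorm (w k))
          - (1/(n:ℝ)) * ∑ i : {i : Fin n // part i = k},
              (lstar i.1 (-(α i.1 + s * Δ i.1)) - lstar i.1 (-(α i.1)))
        = (-lam*s) * dotp u (w k) + (-(lam/2)*s^2) * sqnorm (w k)
          + (-(1/(n:ℝ))) * ∑ i : {i : Fin n // part i = k},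
              (lstar i.1 (-(α i.1 + s * Δ i.1)) - lstar i.1 (-(α i.1))) := fun k => by ring
    rw [Finset.sum_congr rfl fun k _ => h1 k]
    rw [Finset.sum_add_distrib, Finset.sum_add_distrib, ← Finset.mul_sum, ← Finset.mul_sum,
      ← Finset.mul_sum, ← dotp_sum', hsumw, ← hp_def,
      sum_blocks part (fun i => lstar i (-(α i + s * Δ i)) - lstar i (-(α i))), ← hT_def,
      ← hS1_def]
    ring
  -- strong convexity bound
  have SC : T ≤ s * L - γ/2*s*(1-s)*N := by
    have hpt : ∀ i : Fin n, lstar i (-(α i + s * Δ i)) - lstar i (-(α i))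
        ≤ s * (lstar i (-(αstar i)) - lstar i (-(α i))) - γ/2*s*(1-s)*(Δ i)^2 := by
      intro i
      have h := strong_ineq (hstrong i) (-(α i)) (-(αstar i)) s hs0 hs1
      have harg : (1-s) * (-(α i)) + s * (-(αstar i)) = -(α i + s * Δ i) := by
        simp only [hΔ_def]; ring
      have hsq : (-(α i) - -(αstar i))^2 = (Δ i)^2 := by
        simp only [hΔ_def]; ring
      rw [harg, hsq] at h
      linarith
    calc T ≤ ∑ i, (s * (lstar i (-(αstar i)) - lstar i (-(α i))) - γ/2*s*(1-s)*(Δ i)^2) :=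
        Finset.sum_le_sum fun i _ => hpt i
      _ = s * L - γ/2*s*(1-s)*N := by
        rw [Finset.sum_sub_distrib, ← Finset.mul_sum, ← hL_def]
        congr 1
        rw [hN_def, sqnorm, ← Finset.mul_sum]
  clear_value s Δ u uΔ w p q N S1 L T
  -- the algebraic bracket identity
  have hbr : (lam/2)*s^2*(σ*N/(lam^2*(n:ℝ)^2)) = (1/(n:ℝ))*(γ/2*s*(1-s)*N) := by
    field_simp
    linear_combination s * hskey
  have hfin : (lam/2)*s^2*S1 ≤ (lam/2)*s^2*q + (1/(n:ℝ))*(γ/2*s*(1-s)*N) := by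
    have hc : (0:ℝ) ≤ (lam/2)*s^2 := by positivity
    have h4 := mul_le_mul_of_nonneg_left F3 hc
    have h5 : (lam/2)*s^2*(q + σ * N / (lam^2 * (n:ℝ)^2))
        = (lam/2)*s^2*q + (lam/2)*s^2*(σ*N/(lam^2*(n:ℝ)^2)) := by ring
    linarith only [h4, h5.le, h5.ge, hbr.le, hbr.ge]
  have hmono : (lam/2)*(s^2*q) ≤ (lam/2)*(s*q) := by
    have h' : (0:ℝ) ≤ s*(1-s)*q := mul_nonneg (mul_nonneg hs0 (sub_nonneg.2 hs1)) hq0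
    have : s^2*q ≤ s*q := by linarith only [h']
    exact mul_le_mul_of_nonneg_left this (by positivity)
  calc s * (dualObj lam x lstar αstar - dualObj lam x lstar α)
      = s * (-(lam/2) * (2*p + q) - (1/(n:ℝ)) * L) := by rw [F2]
    _ ≤ -lam * s * p - (lam/2) * s^2 * S1 - (1/(n:ℝ)) * (s * L - γ/2*s*(1-s)*N) := by
        linarith only [hfin, hmono]
    _ ≤ -lam * s * p - (lam/2) * s^2 * S1 - (1/(n:ℝ)) * T := by
        have h6 := mul_le_mul_of_nonneg_left SC (le_of_lt (one_div_pos.2 hnR))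
        linarith only [h6]
    _ = ∑ k, (dualObj lam x lstar (updBlk part k α (fun i => α i.1 + s * Δ i.1))
          - dualObj lam x lstar α) := E2.symm
    _ ≤ ∑ k, epsD lam x lstar part k α :=
        Finset.sum_le_sum fun k _ => heps k _
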